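/- Let A be a real n×n matrix, η > 0 with η²·‖A·Aᵀ‖ ≤ 2, and M_η = [[I, -η·A·Aᵀ],[η·I, I - η²·A·Aᵀ]]. Then every complex non-real eigenvalue of M_η has absolute value 1, and the only possible real eigenvalue is 1, which occurs iff A·Aᵀ is singular. -/

import Mathlib

open Matrix

open scoped Matrix.Norms.L2Operator

lemma aux_evec_bound (n : ℕ) (S : Matrix (Fin n) (Fin n) ℝ) (r : ℝ) (u : EuclideanSpace ℝ (Fin n))
    (hu : u ≠ 0) (h : S.mulVec u = r • u) : |r| ≤ ‖S‖ := by
  have h1 := S.l2_opNorm_mulVec u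
  rw [h] at h1
  have h2 : (EuclideanSpace.equiv (Fin n) ℝ).symm (r • (u : Fin n → ℝ)) = r • u := rfl
  rw [h2, norm_smul] at h1
  have : 0 < ‖u‖ := norm_pos_iff.2 hu
  calc |r| = ‖r‖ := rfl
    _ ≤ ‖S‖ := by nlinarith [h1]

lemma aux_eig_real (n : ℕ) (A : Matrix (Fin n) (Fin n) ℝ) (c : ℂ) (y : Fin n → ℂ) (hy : y ≠ 0)
    (h : ((A * A.transpose).map (fun a => (a : ℂ))).mulVec y = c • y) :
    ∃ r : ℝ, c = (r : ℂ) ∧ 0 ≤ r ∧ r ≤ ‖A * A.transpose‖ := by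
  set B : Matrix (Fin n) (Fin n) ℂ := A.map (fun a => (a : ℂ)) with hB
  have hBH : Bᴴ = A.transpose.map (fun a => (a : ℂ)) := by
    ext i j
    simp [Matrix.conjTranspose_apply, hB, Matrix.map_apply]
  have hSc : (A * A.transpose).map (fun a => (a : ℂ)) = B * Bᴴ := by
    rw [hBH, hB]
    exact (A.map_mul (M := A.transpose) (f := Complex.ofRealHom))
  set z : Fin n → ℂ := Bᴴ.mulVec y with hz
  have hp : star y ⬝ᵥ (((A * A.transpose).map (fun a => (a : ℂ))).mulVec y) = star z ⬝ᵥ z := by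
    rw [hSc, ← Matrix.mulVec_mulVec, Matrix.dotProduct_mulVec, ← hz]
    congr 1
    rw [hz, Matrix.star_mulVec, Matrix.conjTranspose_conjTranspose]
  set q : ℝ := ∑ i, Complex.normSq (y i) with hq
  set p : ℝ := ∑ i, Complex.normSq (z i) with hpdef
  have hzq : star z ⬝ᵥ z = (p : ℂ) := by
    simp [dotProduct, hpdef, Complex.normSq_eq_conj_mul_self, Pi.star_apply]
  have hyq : star y ⬝ᵥ y = (q : ℂ) := by
    simp [dotProduct, hq, Complex.normSq_eq_conj_mul_self, Pi.star_apply]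
  have hcq : c * q = (p : ℂ) := by
    have := hp
    rw [h, dotProduct_smul, hyq, hzq] at this
    simpa using this
  have hq0 : 0 < q := by
    rcases Function.ne_iff.1 hy with ⟨i, hi⟩
    have : 0 < Complex.normSq (y i) := Complex.normSq_pos.2 hi
    exact Finset.sum_pos' (fun j _ => Complex.normSq_nonneg _) ⟨i, Finset.mem_univ i, this⟩
  have hp0 : 0 ≤ p := Finset.sum_nonneg fun j _ => Complex.normSq_nonneg _
  refine ⟨p / q, ?_, div_nonneg hp0 hq0.le, ?_⟩
  · have hqne : (q : ℂ) ≠ 0 := by exact_mod_cast hq0.ne'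
    rw [Complex.ofReal_div]
    field_simp
    exact_mod_cast hcq
  · -- extract real eigenvector
    set r : ℝ := p / q with hr
    have hcr : c = (r : ℂ) := by
      have hqne : (q : ℂ) ≠ 0 := by exact_mod_cast hq0.ne'
      rw [hr, Complex.ofReal_div]; field_simp; exact_mod_cast hcq
    have hre : ∀ i, ((((A * A.transpose).map (fun a => (a : ℂ))).mulVec y) i).re
        = (A * A.transpose).mulVec (fun j => (y j).re) i := by
      intro i
      simp [Matrix.mulVec, dotProduct, Complex.re_sum, Matrix.map_apply]
    have him : ∀ i, ((((A * A.transpose).map (fun a => (a : ℂ))).mulVec y) i).im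
        = (A * A.transpose).mulVec (fun j => (y j).im) i := by
      intro i
      simp [Matrix.mulVec, dotProduct, Complex.im_sum, Matrix.map_apply]
    have hur : (A * A.transpose).mulVec (fun j => (y j).re) = r • (fun j => (y j).re) := by
      funext i
      rw [← hre i, h]
      simp [hcr, Pi.smul_apply]
    have hui : (A * A.transpose).mulVec (fun j => (y j).im) = r • (fun j => (y j).im) := by
      funext i
      rw [← him i, h]
      simp [hcr, Pi.smul_apply]
    rcases Function.ne_iff.1 hy with ⟨i, hi⟩
    have : (y i).re ≠ 0 ∨ (y i).im ≠ 0 := by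
      by_contra hcon
      push_neg at hcon
      exact hi (Complex.ext hcon.1 hcon.2)
    have habs : |r| ≤ ‖A * A.transpose‖ := by
      rcases this with h' | h'
      · exact aux_evec_bound n _ r (WithLp.toLp 2 (fun j => (y j).re)) (fun hc => h' (by simpa using congrArg (fun w => w i) hc)) hur
      · exact aux_evec_bound n _ r (WithLp.toLp 2 (fun j => (y j).im)) (fun hc => h' (by simpa using congrArg (fun w => w i) hc)) hui
    exact (le_abs_self r).trans habs

set_option maxHeartbeats 1000000 in
/-- For the symplectic-Euler update matrix `M_η = [[I, -η A Aᵀ],[η I, I - η² A Aᵀ]]`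
with `η² ‖A Aᵀ‖ ≤ 2` (spectral norm): every non-real complex eigenvalue of `M_η`
has absolute value `1`; the only possible real eigenvalue is `1`; and `1` is an
eigenvalue iff `A Aᵀ` is singular. -/
theorem eigenvalues_symplectic_euler_matrix (n : ℕ) (A : Matrix (Fin n) (Fin n) ℝ)
    (η : ℝ) (hη : 0 < η) (hnorm : η ^ 2 * ‖A * A.transpose‖ ≤ 2)
    (M : Matrix (Fin n ⊕ Fin n) (Fin n ⊕ Fin n) ℝ)
    (hM : M = Matrix.fromBlocks 1 (-(η • (A * A.transpose)))
      (η • (1 : Matrix (Fin n) (Fin n) ℝ))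
      (1 - (η ^ 2) • (A * A.transpose))) :
    (∀ (μ : ℂ) (v : (Fin n ⊕ Fin n) → ℂ), v ≠ 0 →
        (M.map (fun a => (a : ℂ))).mulVec v = μ • v →
          (μ.im ≠ 0 → ‖μ‖ = 1) ∧ (μ.im = 0 → μ = 1)) ∧
      ((∃ v : (Fin n ⊕ Fin n) → ℝ, v ≠ 0 ∧ M.mulVec v = v) ↔
        (A * A.transpose).det = 0) := by
  subst hM
  set Sc := (A * A.transpose).map (fun a => (a : ℂ)) with hSc
  have hηC : (η : ℂ) ≠ 0 := Complex.ofReal_ne_zero.2 hη.ne'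
  have hmap : (Matrix.fromBlocks 1 (-(η • (A * A.transpose)))
      (η • (1 : Matrix (Fin n) (Fin n) ℝ))
      (1 - (η ^ 2) • (A * A.transpose))).map (fun a => (a : ℂ))
      = Matrix.fromBlocks 1 (-((η : ℂ) • Sc)) ((η : ℂ) • (1 : Matrix (Fin n) (Fin n) ℂ))
      (1 - ((η : ℂ) ^ 2) • Sc) := by
    have hA : ((1 : Matrix (Fin n) (Fin n) ℝ)).map (fun a => (a : ℂ)) = 1 :=
      Matrix.map_one _ (by simp) (by simp)
    have hB : (-(η • (A * A.transpose))).map (fun a => (a : ℂ)) = -((η : ℂ) • Sc) := by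
      ext i j
      simp [hSc, Matrix.map_apply]
    have hC : ((η • (1 : Matrix (Fin n) (Fin n) ℝ))).map (fun a => (a : ℂ))
        = (η : ℂ) • (1 : Matrix (Fin n) (Fin n) ℂ) := by
      ext i j
      by_cases hij : i = j <;> simp [hij, Matrix.map_apply, Matrix.one_apply]
    have hD : ((1 : Matrix (Fin n) (Fin n) ℝ) - (η ^ 2) • (A * A.transpose)).map
        (fun a => (a : ℂ)) = 1 - ((η : ℂ) ^ 2) • Sc := by
      ext i j
      by_cases hij : i = j <;>
        simp [hij, hSc, Matrix.map_apply, Matrix.sub_apply, Matrix.one_apply] <;>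
        push_cast <;> ring
    rw [Matrix.fromBlocks_map, hA, hB, hC, hD]
  constructor
  · rintro μ v hv hMv
    by_cases hμ1 : μ = 1
    · subst hμ1
      exact ⟨fun h => by simp at h, fun _ => rfl⟩
    rw [hmap, Matrix.fromBlocks_mulVec] at hMv
    set x := v ∘ Sum.inl with hx
    set y := v ∘ Sum.inr with hy
    have e1 : ∀ i, x i - (η : ℂ) * (Sc.mulVec y) i = μ * x i := by
      intro i
      have h0 := congrFun hMv (Sum.inl i)
      simp only [Sum.elim_inl, Pi.add_apply, Pi.smul_apply, smul_eq_mul,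
        Matrix.one_mulVec, Matrix.neg_mulVec, Matrix.smul_mulVec, Pi.neg_apply] at h0
      have h2 : v (Sum.inl i) = x i := rfl
      rw [h2] at h0
      linear_combination h0
    have e2 : ∀ i, (η : ℂ) * x i + y i - (η : ℂ) ^ 2 * (Sc.mulVec y) i = μ * y i := by
      intro i
      have h0 := congrFun hMv (Sum.inr i)
      simp only [Sum.elim_inr, Pi.add_apply, Pi.smul_apply, smul_eq_mul, Pi.sub_apply,
        Matrix.one_mulVec, Matrix.sub_mulVec, Matrix.smul_mulVec, Pi.neg_apply] at h0
      have h2 : v (Sum.inr i) = y i := rfl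
      rw [h2] at h0
      linear_combination h0
    have estar : ∀ i, (η : ℂ) ^ 2 * μ * (Sc.mulVec y) i = -((μ - 1) ^ 2) * y i := by
      intro i
      linear_combination -((μ - 1) * e2 i + (η : ℂ) * e1 i)
    have hyne : y ≠ 0 := by
      intro hy0
      apply hv
      have hw0 : Sc.mulVec y = 0 := by rw [hy0, Matrix.mulVec_zero]
      have hx0 : ∀ i, x i = 0 := by
        intro i
        have h3 := e1 i
        rw [hw0] at h3
        simp only [Pi.zero_apply, mul_zero, sub_zero] at h3
        have h4 : (μ - 1) * x i = 0 := by linear_combination -h3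
        rcases mul_eq_zero.1 h4 with h | h
        · exact absurd (by linear_combination h) hμ1
        · exact h
      funext s
      cases s with
      | inl i => exact hx0 i
      | inr i => exact congrFun hy0 i
    have hμ0 : μ ≠ 0 := by
      intro h0
      apply hyne
      funext i
      have h := estar i
      rw [h0] at h
      simpa using h
    set c : ℂ := -((μ - 1) ^ 2) / ((η : ℂ) ^ 2 * μ) with hc
    have hden : (η : ℂ) ^ 2 * μ ≠ 0 := mul_ne_zero (pow_ne_zero 2 hηC) hμ0
    have heig : Sc.mulVec y = c • y := by
      funext i
      show Sc.mulVec y i = c * y i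
      rw [hc]
      field_simp
      linear_combination estar i
    obtain ⟨r, hcr, hr0, hrle⟩ := aux_eig_real n A c y hyne heig
    set t : ℝ := η ^ 2 * r with ht
    have ht0 : 0 ≤ t := mul_nonneg (sq_nonneg η) hr0
    have ht2 : t ≤ 2 := by
      have h5 := mul_le_mul_of_nonneg_left hrle (sq_nonneg η)
      linarith
    have hquad : μ * μ + ((t : ℂ) - 2) * μ + 1 = 0 := by
      have h1 : -((μ - 1) ^ 2) = c * ((η : ℂ) ^ 2 * μ) := by
        rw [hc]; field_simp
      rw [hcr] at h1
      have h6 : (t : ℂ) = (η : ℂ) ^ 2 * (r : ℂ) := by push_cast [ht]; ring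
      linear_combination μ * h6 - h1
    rw [Complex.ext_iff] at hquad
    obtain ⟨h1, h2⟩ := hquad
    simp only [Complex.add_re, Complex.add_im, Complex.mul_re, Complex.mul_im,
      Complex.sub_re, Complex.sub_im, Complex.one_re, Complex.one_im, Complex.zero_re,
      Complex.zero_im, Complex.ofReal_re, Complex.ofReal_im, Complex.re_ofNat,
      Complex.im_ofNat] at h1 h2
    constructor
    · intro hbne
      have h2a : 2 * μ.re + (t - 2) = 0 := by
        rcases mul_eq_zero.1 (show (2 * μ.re + (t - 2)) * μ.im = 0 by
          linear_combination h2) with h | h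
        · exact h
        · exact absurd h hbne
      have hab : μ.re ^ 2 + μ.im ^ 2 = 1 := by
        linear_combination μ.re * h2a - h1
      have hsq := Complex.sq_norm μ
      rw [Complex.normSq_apply] at hsq
      have hfac : (‖μ‖ - 1) * (‖μ‖ + 1) = 0 := by
        linear_combination hsq + hab
      rcases mul_eq_zero.1 hfac with h | h
      · linarith [sub_eq_zero.1 h]
      · linarith [norm_nonneg μ, h]
    · intro hb0
      rw [hb0] at h1
      have hle : (μ.re - 1) ^ 2 ≤ 0 := by
        rcases le_or_gt μ.re 0 with ha | ha
        · nlinarith [mul_nonneg (by linarith : (0:ℝ) ≤ 2 - t) (by linarith : (0:ℝ) ≤ -μ.re)]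
        · nlinarith [mul_nonneg ht0 ha.le]
      have h7 : μ.re - 1 = 0 := by
        have := sq_eq_zero_iff.1 (le_antisymm hle (sq_nonneg _))
        exact this
      exact Complex.ext (by simp only [Complex.one_re]; linarith) (by simp only [Complex.one_im]; exact hb0)
  · constructor
    · rintro ⟨v, hv, hMv⟩
      rw [Matrix.fromBlocks_mulVec] at hMv
      set x := v ∘ Sum.inl with hx
      set y := v ∘ Sum.inr with hy
      have hSy : (A * A.transpose).mulVec y = 0 := by
        funext i
        have h0 := congrFun hMv (Sum.inl i)
        simp only [Sum.elim_inl, Pi.add_apply, Pi.smul_apply, smul_eq_mul, Pi.neg_apply,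
          Matrix.one_mulVec, Matrix.neg_mulVec, Matrix.smul_mulVec] at h0
        have h2 : v (Sum.inl i) = x i := rfl
        rw [h2] at h0
        have h3 : η * (A * A.transpose).mulVec y i = 0 := by linarith
        rcases mul_eq_zero.1 h3 with h | h
        · exact absurd h hη.ne'
        · exact h
      have hx0 : ∀ i, x i = 0 := by
        intro i
        have h0 := congrFun hMv (Sum.inr i)
        simp only [Sum.elim_inr, Pi.add_apply, Pi.smul_apply, smul_eq_mul, Pi.sub_apply,
          Matrix.one_mulVec, Matrix.sub_mulVec, Matrix.smul_mulVec] at h0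
        rw [hSy] at h0
        have h2 : v (Sum.inr i) = y i := rfl
        rw [h2] at h0
        simp only [Pi.zero_apply, mul_zero, sub_zero] at h0
        have h3 : η * x i = 0 := by linarith
        rcases mul_eq_zero.1 h3 with h | h
        · exact absurd h hη.ne'
        · exact h
      have hyne : y ≠ 0 := by
        intro hy0
        apply hv
        funext s
        cases s with
        | inl i => exact hx0 i
        | inr i => exact congrFun hy0 i
      exact (Matrix.exists_mulVec_eq_zero_iff).1 ⟨y, hyne, hSy⟩
    · intro hdet
      obtain ⟨y, hyne, hSy⟩ := (Matrix.exists_mulVec_eq_zero_iff).2 hdet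
      refine ⟨Sum.elim 0 y, ?_, ?_⟩
      · intro h0
        apply hyne
        funext i
        exact congrFun h0 (Sum.inr i)
      · rw [Matrix.fromBlocks_mulVec]
        have hl : (Sum.elim (0 : Fin n → ℝ) y) ∘ Sum.inl = 0 := by funext i; rfl
        have hr' : (Sum.elim (0 : Fin n → ℝ) y) ∘ Sum.inr = y := by funext i; rfl
        rw [hl, hr']
        funext s
        cases s with
        | inl i =>
          simp [Matrix.one_mulVec, Matrix.neg_mulVec, Matrix.smul_mulVec, hSy,
            Matrix.mulVec_zero]
        | inr i =>
          simp [Matrix.smul_mulVec, Matrix.one_mulVec, Matrix.sub_mulVec,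
            Matrix.mulVec_zero, hSy]
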